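/- Let g : [1,∞) → [0,∞) and ϕ : [1,∞) → [0,∞) be increasing-to-infinity functions, and suppose there exists a strictly increasing sequence {t_k} with t_k → +∞ such that ∑_{k=1}^∞ g(t_{k+1})/ϕ(t_k) < +∞. If G belongs to the class 𝔾₋(ϕ) of ϕ-repulsive graphs, then G is g-tempered. -/

import Mathlib

open Filter

/-- Vertex degree (cardinality of the neighbour set). -/
noncomputable def deg {V : Type*} (G : SimpleGraph V) (x : V) : ℕ :=
  (G.neighborSet x).ncard

/-- `G(A;g)`: average of `g` of the degrees over the vertex set of a subgraph. -/
noncomputable def degAvg {V : Type*} (G : SimpleGraph V) (g : ℝ → ℝ)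
    (A : G.Subgraph) : ℝ :=
  (∑ᶠ x ∈ A.verts, g (deg G x)) / (A.verts.ncard : ℝ)

/-- An animal: a finite connected subgraph. -/
def IsAnimal {V : Type*} (G : SimpleGraph V) (A : G.Subgraph) : Prop :=
  A.Connected ∧ A.verts.Finite

/-- The ball `V_r(x)` of radius `r` around `x` in the graph distance. -/
def gball {V : Type*} (G : SimpleGraph V) (x : V) (r : ℕ) : Set V :=
  {y | G.dist x y ≤ r}

/-- `G` is `g`-tempered: there is `γ < ∞` such that for every vertex `x` there is a
strictly increasing sequence `{N_k} ⊆ ℕ` with `G(A;g) ≤ γ` for every animal `A`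
contained in the ball of radius `N_k` around `x` having at least `N_k + 1` vertices. -/
def Tempered {V : Type*} (G : SimpleGraph V) (g : ℝ → ℝ) : Prop :=
  ∃ γ : ℝ, ∀ x : V, ∃ N : ℕ → ℕ, StrictMono N ∧
    ∀ k : ℕ, ∀ A : G.Subgraph, IsAnimal G A → A.verts ⊆ gball G x (N k) →
      N k + 1 ≤ A.verts.ncard → degAvg G g A ≤ γ

/-- `G ∈ 𝔾₋(ϕ)`: there is `n*` such that `ρ(x,y) ≥ ϕ(m₋(x,y))` whenever
`m₋(x,y) = min{n(x),n(y)} ≥ n*`. -/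
def Repulsive {V : Type*} (G : SimpleGraph V) (φ : ℝ → ℝ) : Prop :=
  ∃ nstar : ℕ, ∀ x y : V, x ≠ y →
    (nstar : ℕ) ≤ min (deg G x) (deg G y) →
      φ (min (deg G x) (deg G y) : ℕ) ≤ (G.dist x y : ℝ)

section Aux

private lemma exists_adj_pred {W : Type*} (H : SimpleGraph W) {v w : W}
    (h : H.Reachable v w) (hd : 0 < H.dist v w) :
    ∃ u, H.Adj u w ∧ H.dist v u + 1 ≤ H.dist v w := by
  obtain ⟨q, hq⟩ := h.symm.exists_walk_length_eq_dist
  cases q with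
  | nil =>
      rw [SimpleGraph.dist_comm] at hd
      simp at hq
      simp at hd
  | @cons _ u _ hadj q' =>
      refine ⟨u, hadj.symm, ?_⟩
      have h1 : H.dist v u ≤ q'.reverse.length := SimpleGraph.dist_le _
      rw [SimpleGraph.Walk.length_reverse] at h1
      rw [SimpleGraph.Walk.length_cons] at hq
      rw [SimpleGraph.dist_comm] at hq
      omega

private lemma ball_growth {W : Type*} [Fintype W] (H : SimpleGraph W) (hc : H.Connected)
    (v : W) (R : ℕ) (p : W → Prop) [DecidablePred p] (hp : ∀ w, p w ↔ H.dist v w ≤ R) :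
    min (R + 1) (Fintype.card W) ≤ (Finset.univ.filter p).card := by
  classical
  have hcongr : Finset.univ.filter p = Finset.univ.filter (fun w => H.dist v w ≤ R) :=
    Finset.filter_congr (fun w _ => by rw [hp])
  rw [hcongr]
  clear hcongr hp
  induction R with
  | zero =>
      have hv : v ∈ Finset.univ.filter (fun w => H.dist v w ≤ 0) := by simp
      have h1 : 1 ≤ (Finset.univ.filter (fun w => H.dist v w ≤ 0)).card :=
        Finset.card_pos.2 ⟨v, hv⟩
      omega
  | succ R ih =>
      by_cases hu : Finset.univ.filter (fun w => H.dist v w ≤ R) = Finset.univ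
      · have hsub : (Finset.univ : Finset W) ⊆ Finset.univ.filter (fun w => H.dist v w ≤ R + 1) := by
          intro w _
          have hw : w ∈ Finset.univ.filter (fun w => H.dist v w ≤ R) := by
            rw [hu]; exact Finset.mem_univ w
          simp only [Finset.mem_filter] at hw ⊢
          exact ⟨Finset.mem_univ w, hw.2.trans (Nat.le_succ R)⟩
        have hcard := Finset.card_le_card hsub
        rw [Finset.card_univ] at hcard
        omega
      · have hne : (Finset.univ \ Finset.univ.filter (fun w => H.dist v w ≤ R)).Nonempty := by
          rw [Finset.sdiff_nonempty]
          intro hsub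
          exact hu (Finset.Subset.antisymm (Finset.subset_univ _) hsub)
        obtain ⟨w₀, hw₀, hmin⟩ := Finset.exists_min_image _ (fun w => H.dist v w) hne
        have hw₀' : ¬ (H.dist v w₀ ≤ R) := by
          simp only [Finset.mem_sdiff, Finset.mem_filter, Finset.mem_univ, true_and,
            not_and, not_le] at hw₀
          omega
        have hd0 : 0 < H.dist v w₀ := by omega
        obtain ⟨u, hadj, hu'⟩ := exists_adj_pred H (hc.preconnected v w₀) hd0
        have huB : H.dist v u ≤ R := by
          by_contra hnot
          have humem : u ∈ Finset.univ \ Finset.univ.filter (fun w => H.dist v w ≤ R) := by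
            simp only [Finset.mem_sdiff, Finset.mem_filter, Finset.mem_univ, true_and,
              not_le]
            omega
          have := hmin u humem
          omega
        have hw₀R : H.dist v w₀ ≤ R + 1 := by
          have htri : H.dist v w₀ ≤ H.dist v u + H.dist u w₀ := hc.dist_triangle
          have hone : H.dist u w₀ ≤ 1 := by
            have := SimpleGraph.dist_le (SimpleGraph.Walk.cons hadj SimpleGraph.Walk.nil)
            simpa using this
          omega
        have hssub : Finset.univ.filter (fun w => H.dist v w ≤ R)
            ⊂ Finset.univ.filter (fun w => H.dist v w ≤ R + 1) := by
          refine (Finset.ssubset_iff_of_subset ?_).2 ⟨w₀, by simp [hw₀R], by simp [hw₀']⟩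
          intro w hw
          simp only [Finset.mem_filter, Finset.mem_univ, true_and] at hw ⊢
          omega
        have hlt := Finset.card_lt_card hssub
        omega

private lemma gdist_le_subgraph_dist {V : Type*} {G : SimpleGraph V} (A : G.Subgraph)
    (hA : A.Connected) (u w : ↥A.verts) :
    G.dist ↑u ↑w ≤ A.coe.dist u w := by
  obtain ⟨p, hp⟩ := (hA.coe.preconnected u w).exists_walk_length_eq_dist
  have h1 : G.dist ↑u ↑w ≤ (p.map A.hom).length := SimpleGraph.dist_le _
  rwa [SimpleGraph.Walk.length_map, hp] at h1

end Aux

/-- if `g, ϕ` increase to infinity and there is a strictly increasing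
sequence `t_k → ∞` with `∑_k g(t_{k+1})/ϕ(t_k) < ∞`, then every `ϕ`-repulsive
graph is `g`-tempered. -/
theorem stmt_4 {V : Type*} (G : SimpleGraph V) (hconn : G.Connected)
    (g φ : ℝ → ℝ) (hg : Monotone g) (hgTop : Tendsto g atTop atTop)
    (hphi : Monotone φ) (hphiTop : Tendsto φ atTop atTop)
    (hg0 : ∀ t, 0 ≤ g t) (hphi0 : ∀ t, 0 ≤ φ t)
    (t : ℕ → ℝ) (ht : StrictMono t) (htTop : Tendsto t atTop atTop)
    (hsum : Summable (fun k => g (t (k + 1)) / φ (t k)))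
    (hrep : Repulsive G φ) :
    Tempered G g := by
  classical
  obtain ⟨nstar, hns⟩ := hrep
  have hφt : Tendsto (fun k => φ (t k)) atTop atTop := hphiTop.comp htTop
  -- choose k2
  have h1 : ∀ᶠ k in atTop, (nstar : ℝ) ≤ t k := htTop.eventually_ge_atTop _
  have h2 : ∀ᶠ (k : ℕ) in atTop, (2 : ℝ) ≤ φ (t k) := hφt.eventually_ge_atTop _
  have h3 : ∀ᶠ (k : ℕ) in atTop, g (t (k + 1)) / φ (t k) < 1/4 :=
    hsum.tendsto_atTop_zero.eventually_lt_const (by norm_num)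
  obtain ⟨k2, hk2⟩ := eventually_atTop.1 ((h1.and (h2.and h3)))
  have hns_le : (nstar : ℝ) ≤ t k2 := (hk2 k2 le_rfl).1
  have hφ2 : ∀ k, k2 ≤ k → (2:ℝ) ≤ φ (t k) := fun k hk => (hk2 k hk).2.1
  have hquarter : ∀ k, k2 ≤ k → 4 * g (t (k + 1)) ≤ φ (t k) := by
    intro k hk
    have hq := (hk2 k hk).2.2
    have h2' := (hk2 k hk).2.1
    rw [div_lt_iff₀ (by linarith)] at hq
    linarith
  -- 4 g ≤ φ beyond t k2
  have hT : ∀ s : ℝ, t k2 ≤ s → 4 * g s ≤ φ s := by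
    intro s hs
    have hex : ∃ j : ℕ, s < t (k2 + j) := by
      obtain ⟨n, hn⟩ := eventually_atTop.1 (htTop.eventually_gt_atTop s)
      exact ⟨n, hn (k2 + n) (by omega)⟩
    have hj0 : Nat.find hex ≠ 0 := by
      intro h0
      have := Nat.find_spec hex
      rw [h0] at this
      simp only [Nat.add_zero] at this
      linarith
    obtain ⟨j, hj⟩ : ∃ j, Nat.find hex = j + 1 := ⟨Nat.find hex - 1, by omega⟩
    have hlow : t (k2 + j) ≤ s := by
      have := Nat.find_min hex (m := j) (by omega)
      linarith [not_lt.1 this]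
    have hhigh : s < t (k2 + j + 1) := by
      have := Nat.find_spec hex
      rwa [hj] at this
    calc 4 * g s ≤ 4 * g (t (k2 + j + 1)) := by
          have := hg hhigh.le
          linarith
      _ ≤ φ (t (k2 + j)) := hquarter _ (by omega)
      _ ≤ φ s := hphi hlow
  set S := ∑' k, g (t (k + 1)) / φ (t k) with hS
  have hSle : ∀ (F : Finset ℕ), ∑ k ∈ F, (g (t (k + 1)) / φ (t k)) ≤ S :=
    fun F => Summable.sum_le_tsum F (fun i _ => div_nonneg (hg0 _) (hphi0 _)) hsum
  -- the K function
  have hKex : ∀ r : ℕ, ∃ k, k2 ≤ k ∧ 2 * (r : ℝ) < φ (t k) := by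
    intro r
    obtain ⟨n, hn⟩ := eventually_atTop.1 (hφt.eventually_gt_atTop (2 * r))
    exact ⟨max n k2, le_max_right _ _, hn _ (le_max_left _ _)⟩
  have hKex' : ∀ r : ℕ, ∃ k, (k2 ≤ k ∧ 2 * (r : ℝ) < φ (t k)) ∧
      ∀ j, j < k → ¬(k2 ≤ j ∧ 2 * (r : ℝ) < φ (t j)) :=
    fun r => ⟨Nat.find (hKex r), Nat.find_spec (hKex r), fun j hj => Nat.find_min (hKex r) hj⟩
  choose K hKs hKm using hKex'
  have hKlow : ∀ r : ℕ, ∀ j, k2 ≤ j → j < K r → φ (t j) ≤ 2 * (r : ℝ) := by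
    intro r j hj1 hj2
    have := hKm r j hj2
    push_neg at this
    exact this hj1
  -- repulsion helper
  have hrep' : ∀ u w : V, u ≠ w → ∀ s : ℝ, t k2 ≤ s → s ≤ (deg G u : ℝ) →
      s ≤ (deg G w : ℝ) → φ s ≤ (G.dist u w : ℝ) := by
    intro u w hne s hs hu hw
    have hmin : s ≤ ((min (deg G u) (deg G w) : ℕ) : ℝ) := by
      rw [Nat.cast_min]; exact le_min hu hw
    have hstar : nstar ≤ min (deg G u) (deg G w) := by
      have : (nstar : ℝ) ≤ ((min (deg G u) (deg G w) : ℕ) : ℝ) := by linarith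
      exact_mod_cast this
    exact le_trans (hphi hmin) (hns u w hne hstar)
  -- distance bound inside a ball
  have hdist2r : ∀ (x : V) (r : ℕ) (u w : V), G.dist x u ≤ r → G.dist x w ≤ r →
      (G.dist u w : ℝ) ≤ 2 * (r : ℝ) := by
    intro x r u w hu hw
    have htri : G.dist u w ≤ G.dist u x + G.dist x w := hconn.dist_triangle
    have hcomm : G.dist u x = G.dist x u := SimpleGraph.dist_comm
    have : G.dist u w ≤ r + r := by omega
    have hcast : (G.dist u w : ℝ) ≤ ((r + r : ℕ) : ℝ) := Nat.cast_le.2 this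
    push_cast at hcast
    linarith
  -- uniqueness of a high-degree vertex in a ball
  have huniq : ∀ (x : V) (r : ℕ) (u w : V), G.dist x u ≤ r → G.dist x w ≤ r →
      t (K r) ≤ (deg G u : ℝ) → t (K r) ≤ (deg G w : ℝ) → u = w := by
    intro x r u w hu hw hdu hdw
    by_contra hne
    have h5 := hrep' u w hne (t (K r)) (ht.monotone (hKs r).1) hdu hdw
    have h6 := hdist2r x r u w hu hw
    have h7 := (hKs r).2
    linarith
  -- the selection lemma
  have hsel : ∀ (x : V) (M : ℕ), ∃ r : ℕ, M ≤ r ∧ ∀ v : V, G.dist x v ≤ r →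
      t (K r) ≤ (deg G v : ℝ) → g (deg G v) ≤ (r : ℝ) + 1 := by
    intro x M
    by_contra hcon
    push_neg at hcon
    obtain ⟨v, hv1, hv2, hv3⟩ := hcon M le_rfl
    set r' := ⌈g (deg G v)⌉₊ with hr'
    have hMr' : M ≤ r' := by
      have hMlt : (M : ℝ) < g (deg G v) := by linarith
      exact (Nat.lt_ceil.2 hMlt).le
    obtain ⟨v', hw1, hw2, hw3⟩ := hcon r' hMr'
    have hgd_le : g (deg G v) ≤ (r' : ℝ) := Nat.le_ceil _
    have hne : v ≠ v' := by
      rintro rfl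
      linarith
    -- both degrees at least t k2
    have hdv : t k2 ≤ (deg G v : ℝ) := le_trans (ht.monotone (hKs M).1) hv2
    have hdv' : t k2 ≤ (deg G v' : ℝ) := le_trans (ht.monotone (hKs r').1) hw2
    set s := min ((deg G v : ℝ)) ((deg G v' : ℝ)) with hs'
    have hsk2 : t k2 ≤ s := le_min hdv hdv'
    have hφs := hrep' v v' hne s hsk2 (min_le_left _ _) (min_le_right _ _)
    have h4g := hT s hsk2
    have hgs : g s = g (deg G v) := by
      rw [hs', hg.map_min]
      exact min_eq_left (by linarith)
    have hdd : (G.dist v v' : ℝ) ≤ 2 * (r' : ℝ) := by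
      have h6 : G.dist v v' ≤ G.dist v x + G.dist x v' := hconn.dist_triangle
      have hcomm : G.dist v x = G.dist x v := SimpleGraph.dist_comm
      have h7 : G.dist v v' ≤ M + r' := by omega
      have h8 : (G.dist v v' : ℝ) ≤ ((M + r' : ℕ) : ℝ) := Nat.cast_le.2 h7
      push_cast at h8
      have : (M : ℝ) ≤ (r' : ℝ) := Nat.cast_le.2 hMr'
      linarith
    have hceil : (r' : ℝ) < g (deg G v) + 1 := Nat.ceil_lt_add_one (hg0 _)
    have hM0 : (0 : ℝ) ≤ (M : ℝ) := Nat.cast_nonneg _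
    rw [hgs] at h4g
    linarith
  -- the main bound
  set γ := g (t k2) + 2 * S + 1 with hγ
  have hmain : ∀ (x : V) (r : ℕ),
      (∀ v : V, G.dist x v ≤ r → t (K r) ≤ (deg G v : ℝ) → g (deg G v) ≤ (r : ℝ) + 1) →
      ∀ A : G.Subgraph, IsAnimal G A → A.verts ⊆ gball G x r →
      r + 1 ≤ A.verts.ncard → degAvg G g A ≤ γ := by
    intro x r hgood A hAnim hsub hcard
    obtain ⟨hAconn, hAfin⟩ := hAnim
    haveI : Fintype ↥A.verts := hAfin.fintype
    set FA : Finset V := A.verts.toFinset with hFA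
    have hFAcard : A.verts.ncard = FA.card := Set.ncard_eq_toFinset_card' _
    set m := A.verts.ncard with hm
    have hmpos : (0:ℝ) < (m:ℝ) := by
      have h0 : 0 < m := by omega
      exact_mod_cast h0
    have hmr : (r:ℝ) + 1 ≤ (m:ℝ) := by exact_mod_cast hcard
    have hcardW : Fintype.card ↥A.verts = m := by
      rw [hm, Set.ncard_eq_toFinset_card']
      exact (Set.toFinset_card _).symm
    have hdistx : ∀ v ∈ FA, G.dist x v ≤ r := by
      intro v hv
      rw [hFA, Set.mem_toFinset] at hv
      exact hsub hv
    -- pointwise bound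
    have hpt : ∀ v ∈ FA, g (deg G v) ≤ g (t k2)
        + (if t (K r) ≤ (deg G v:ℝ) then (r:ℝ) + 1 else 0)
        + ∑ k ∈ Finset.Ico k2 (K r),
            (if t k ≤ (deg G v:ℝ) ∧ (deg G v:ℝ) < t (k+1) then g (t (k+1)) else 0) := by
      intro v hv
      have hite0 : ∀ k, k ∈ Finset.Ico k2 (K r) → (0:ℝ) ≤
          (if t k ≤ (deg G v:ℝ) ∧ (deg G v:ℝ) < t (k+1) then g (t (k+1)) else 0) := by
        intro k _
        split
        · exact hg0 _
        · exact le_rfl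
      have hsum0 : (0:ℝ) ≤ ∑ k ∈ Finset.Ico k2 (K r),
          (if t k ≤ (deg G v:ℝ) ∧ (deg G v:ℝ) < t (k+1) then g (t (k+1)) else 0) :=
        Finset.sum_nonneg hite0
      rcases le_or_gt (t (K r)) ((deg G v:ℝ)) with htop | hnotop
      · have hgd := hgood v (hdistx v hv) htop
        rw [if_pos htop]
        linarith [hg0 (t k2)]
      · rcases lt_or_ge ((deg G v:ℝ)) (t k2) with hlow | hmid
        · have hgd := hg hlow.le
          rw [if_neg (not_le.2 hnotop)]
          linarith
        · have hexj : ∃ j : ℕ, (deg G v:ℝ) < t (k2 + j) := by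
            refine ⟨K r - k2, ?_⟩
            have he : k2 + (K r - k2) = K r := by
              have := (hKs r).1
              omega
            rw [he]
            exact hnotop
          have hj0 : Nat.find hexj ≠ 0 := by
            intro h0
            have hff := Nat.find_spec hexj
            rw [h0] at hff
            simp only [Nat.add_zero] at hff
            linarith
          obtain ⟨j, hj⟩ : ∃ j, Nat.find hexj = j + 1 := ⟨Nat.find hexj - 1, by omega⟩
          have hlow2 : t (k2 + j) ≤ (deg G v:ℝ) := by
            have := Nat.find_min hexj (m := j) (by omega)
            linarith [not_lt.1 this]
          have hhigh2 : (deg G v:ℝ) < t (k2 + j + 1) := by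
            have := Nat.find_spec hexj
            rwa [hj] at this
          have hkK : k2 + j < K r := by
            have h9 : t (k2 + j) < t (K r) := lt_of_le_of_lt hlow2 hnotop
            exact ht.lt_iff_lt.1 h9
          have hmem : k2 + j ∈ Finset.Ico k2 (K r) := Finset.mem_Ico.2 ⟨by omega, hkK⟩
          have hsingle := Finset.single_le_sum hite0 hmem
          rw [if_pos ⟨hlow2, hhigh2⟩] at hsingle
          have hgd := hg hhigh2.le
          rw [if_neg (not_le.2 hnotop)]
          linarith [hg0 (t k2)]
    -- at most one vertex above the top threshold
    have htopcard : (FA.filter (fun v => t (K r) ≤ (deg G v:ℝ))).card ≤ 1 := by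
      apply Finset.card_le_one.2
      intro a ha b hb
      rw [Finset.mem_filter] at ha hb
      exact huniq x r a b (hdistx a ha.1) (hdistx b hb.1) ha.2 hb.2
    -- band counting
    have hband : ∀ k, k2 ≤ k → k < K r →
        ((FA.filter (fun v => t k ≤ (deg G v:ℝ) ∧ (deg G v:ℝ) < t (k+1))).card : ℝ)
          ≤ 2 * (m:ℝ) / φ (t k) := by
      intro k hk1 hkK
      have hφ2k : (2:ℝ) ≤ φ (t k) := hφ2 k hk1
      have hφpos : (0:ℝ) < φ (t k) := by linarith
      set R : ℕ := ⌈φ (t k) / 2⌉₊ - 1 with hRdef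
      have hceil1 : 1 ≤ ⌈φ (t k)/2⌉₊ := Nat.ceil_pos.2 (by linarith)
      have hR1 : R + 1 = ⌈φ (t k)/2⌉₊ := by omega
      have hR1' : (R:ℝ) + 1 = (⌈φ (t k)/2⌉₊ : ℝ) := by exact_mod_cast congrArg (Nat.cast (R := ℝ)) hR1
      have hceillt : (⌈φ (t k)/2⌉₊ : ℝ) < φ (t k)/2 + 1 := Nat.ceil_lt_add_one (by positivity)
      have hcoe : A.coe.Connected := hAconn.coe
      set C : Finset ↥A.verts :=
        Finset.univ.filter (fun v => t k ≤ (deg G ↑v:ℝ) ∧ (deg G ↑v:ℝ) < t (k+1)) with hC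
      have hcardeq : (FA.filter (fun v => t k ≤ (deg G v:ℝ) ∧ (deg G v:ℝ) < t (k+1))).card
          = C.card := by
        symm
        apply Finset.card_bij (fun (a : ↥A.verts) (_ : a ∈ C) => (a : V))
        · intro a ha
          rw [hC, Finset.mem_filter] at ha
          rw [Finset.mem_filter, hFA, Set.mem_toFinset]
          exact ⟨a.2, ha.2⟩
        · intro a _ b _ hab
          exact Subtype.ext hab
        · intro b hb
          rw [Finset.mem_filter, hFA, Set.mem_toFinset] at hb
          exact ⟨⟨b, hb.1⟩, by rw [hC, Finset.mem_filter]; exact ⟨Finset.mem_univ _, hb.2⟩, rfl⟩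
      set ballF : ↥A.verts → Finset ↥A.verts :=
        fun v => Finset.univ.filter (fun w => A.coe.dist v w ≤ R) with hballF
      have hdisjoint : ∀ u ∈ C, ∀ v' ∈ C, u ≠ v' → Disjoint (ballF u) (ballF v') := by
        intro u hu v' hv' hne
        rw [Finset.disjoint_left]
        intro z hz1 hz2
        rw [hballF] at hz1 hz2
        simp only [Finset.mem_filter, Finset.mem_univ, true_and] at hz1 hz2
        have htri : A.coe.dist u v' ≤ A.coe.dist u z + A.coe.dist z v' := hcoe.dist_triangle
        have hcm : A.coe.dist z v' = A.coe.dist v' z := SimpleGraph.dist_comm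
        have h2R : A.coe.dist u v' ≤ 2*R := by omega
        have hGA := gdist_le_subgraph_dist A hAconn u v'
        rw [hC, Finset.mem_filter] at hu hv'
        have hcne : (u : V) ≠ (v' : V) := fun h => hne (Subtype.ext h)
        have hφle := hrep' ↑u ↑v' hcne (t k) (ht.monotone hk1) hu.2.1 hv'.2.1
        have hd2R : G.dist ↑u ↑v' ≤ 2*R := le_trans hGA h2R
        have hd2R' : ((G.dist ↑u ↑v' : ℕ):ℝ) ≤ ((2*R : ℕ):ℝ) := Nat.cast_le.2 hd2R
        push_cast at hd2R'
        linarith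
      have hgrow : ∀ v ∈ C, min (R+1) (Fintype.card ↥A.verts) ≤ (ballF v).card := by
        intro v _
        rw [hballF]
        exact ball_growth A.coe hcoe v R _ (fun w => Iff.rfl)
      have h6 : C.card * min (R+1) (Fintype.card ↥A.verts) ≤ Fintype.card ↥A.verts := by
        have e1 : ∑ _v ∈ C, min (R+1) (Fintype.card ↥A.verts)
            = C.card * min (R+1) (Fintype.card ↥A.verts) := by
          rw [Finset.sum_const, smul_eq_mul]
        have e2 : ∑ v ∈ C, min (R+1) (Fintype.card ↥A.verts) ≤ ∑ v ∈ C, (ballF v).card :=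
          Finset.sum_le_sum hgrow
        have e3 : ∑ v ∈ C, (ballF v).card = (C.biUnion ballF).card :=
          (Finset.card_biUnion hdisjoint).symm
        have e4 : (C.biUnion ballF).card ≤ Fintype.card ↥A.verts := by
          have h5 := Finset.card_le_card (Finset.subset_univ (C.biUnion ballF))
          rwa [Finset.card_univ] at h5
        omega
      have hminR : φ (t k)/2 ≤ ((min (R+1) (Fintype.card ↥A.verts) : ℕ) : ℝ) := by
        rw [Nat.cast_min]
        apply le_min
        · have := Nat.le_ceil (φ (t k)/2)
          push_cast
          linarith
        · have hφ2r : φ (t k) ≤ 2 * (r:ℝ) := hKlow r k hk1 hkK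
          have hcm' : ((Fintype.card ↥A.verts : ℕ):ℝ) = (m:ℝ) := by rw [hcardW]
          rw [hcm']
          linarith
      have h7 : (C.card:ℝ) * (φ (t k)/2) ≤ (m:ℝ) := by
        calc (C.card:ℝ) * (φ (t k)/2)
            ≤ (C.card:ℝ) * ((min (R+1) (Fintype.card ↥A.verts):ℕ):ℝ) :=
              mul_le_mul_of_nonneg_left hminR (Nat.cast_nonneg _)
          _ = ((C.card * min (R+1) (Fintype.card ↥A.verts) : ℕ):ℝ) := by push_cast; ring
          _ ≤ ((Fintype.card ↥A.verts : ℕ):ℝ) := Nat.cast_le.2 h6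
          _ = (m:ℝ) := by rw [hcardW]
      rw [hcardeq, le_div_iff₀ hφpos]
      linarith
    -- assembling the sum bound
    have hsplit := Finset.sum_le_sum hpt
    rw [Finset.sum_add_distrib, Finset.sum_add_distrib] at hsplit
    have ht1 : ∑ _v ∈ FA, g (t k2) = (m:ℝ) * g (t k2) := by
      rw [Finset.sum_const, nsmul_eq_mul, hFAcard]
    have ht2 : ∑ v ∈ FA, (if t (K r) ≤ (deg G v:ℝ) then (r:ℝ)+1 else 0) ≤ (m:ℝ) := by
      rw [← Finset.sum_filter, Finset.sum_const, nsmul_eq_mul]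
      have hc1 : ((FA.filter (fun v => t (K r) ≤ (deg G v:ℝ))).card : ℝ) ≤ 1 := by
        exact_mod_cast htopcard
      have hr1 : (0:ℝ) ≤ (r:ℝ) + 1 := by positivity
      nlinarith
    have ht3 : ∑ v ∈ FA, ∑ k ∈ Finset.Ico k2 (K r),
        (if t k ≤ (deg G v:ℝ) ∧ (deg G v:ℝ) < t (k+1) then g (t (k+1)) else 0)
        ≤ 2*(m:ℝ)*S := by
      rw [Finset.sum_comm]
      have hterm : ∀ k ∈ Finset.Ico k2 (K r),
          ∑ v ∈ FA, (if t k ≤ (deg G v:ℝ) ∧ (deg G v:ℝ) < t (k+1) then g (t (k+1)) else 0)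
          ≤ 2*(m:ℝ) * (g (t (k+1)) / φ (t k)) := by
        intro k hk
        rw [Finset.mem_Ico] at hk
        rw [← Finset.sum_filter, Finset.sum_const, nsmul_eq_mul]
        have hb := hband k hk.1 hk.2
        have hg1 : (0:ℝ) ≤ g (t (k+1)) := hg0 _
        have hφpos : (0:ℝ) < φ (t k) := by linarith [hφ2 k hk.1]
        calc ((FA.filter _).card:ℝ) * g (t (k+1))
            ≤ (2*(m:ℝ)/φ (t k)) * g (t (k+1)) := mul_le_mul_of_nonneg_right hb hg1
          _ = 2*(m:ℝ) * (g (t (k+1))/φ (t k)) := by ring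
      calc ∑ k ∈ Finset.Ico k2 (K r), ∑ v ∈ FA,
            (if t k ≤ (deg G v:ℝ) ∧ (deg G v:ℝ) < t (k+1) then g (t (k+1)) else 0)
          ≤ ∑ k ∈ Finset.Ico k2 (K r), 2*(m:ℝ)*(g (t (k+1))/φ (t k)) :=
            Finset.sum_le_sum hterm
        _ = 2*(m:ℝ) * ∑ k ∈ Finset.Ico k2 (K r), (g (t (k+1))/φ (t k)) := by
            rw [Finset.mul_sum]
        _ ≤ 2*(m:ℝ)*S := by
            have hps := hSle (Finset.Ico k2 (K r))
            have h2m : (0:ℝ) ≤ 2*(m:ℝ) := by positivity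
            exact mul_le_mul_of_nonneg_left hps h2m
    have hfin : ∑ᶠ v ∈ A.verts, g (deg G v) = ∑ v ∈ FA, g (deg G v) :=
      finsum_mem_eq_toFinset_sum _ _
    unfold degAvg
    rw [hfin, ← hm, div_le_iff₀ hmpos]
    have hγm : γ * (m:ℝ) = (m:ℝ)*g (t k2) + (m:ℝ) + 2*(m:ℝ)*S := by
      rw [hγ]; ring
    linarith
  -- assembly
  refine ⟨γ, fun x => ?_⟩
  choose f hf1 hf2 using hsel x
  obtain ⟨N, hN0, hNsucc⟩ : ∃ N : ℕ → ℕ, N 0 = f 0 ∧ ∀ k, N (k + 1) = f (N k + 1) :=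
    ⟨fun k => Nat.rec (f 0) (fun _ ih => f (ih + 1)) k, rfl, fun _ => rfl⟩
  have hNgood : ∀ k, ∀ v : V, G.dist x v ≤ N k → t (K (N k)) ≤ (deg G v : ℝ) →
      g (deg G v) ≤ (N k : ℝ) + 1 := by
    intro k
    cases k with
    | zero => rw [hN0]; exact hf2 0
    | succ k => rw [hNsucc]; exact hf2 _
  have hNmono : StrictMono N := by
    apply strictMono_nat_of_lt_succ
    intro k
    have := hf1 (N k + 1)
    rw [hNsucc]
    omega
  exact ⟨N, hNmono, fun k => hmain x (N k) (hNgood k)⟩
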